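/- Fix Gm > 0, τ ≥ 1, s > 0 and 0 < ε₀ < π, and set ζ = 2/(τ²·s²) and E = erf(ε₀/(√2·s)) where erf(x) = (2/√π)·∫₀ˣ exp(−t²) dt. For every g with 0 < g < Gm, the function F(g) = 1 − erf(√ζ·arccos(√(g/Gm)))/E is differentiable at g with derivative F'(g) = √ζ·exp(−ζ·arccos²(√(g/Gm))) / (E·√π·√g·√(Gm − g)). -/

import Mathlib

open Real

/-- The error function `erf x = (2/√π) ∫₀ˣ exp (-t²) dt`. -/
noncomputable def erf (x : ℝ) : ℝ :=
  2 / Real.sqrt Real.pi * ∫ t in (0:ℝ)..x, Real.exp (-t ^ 2)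

lemma erf_hasDerivAt (x : ℝ) :
    HasDerivAt erf (2 / Real.sqrt Real.pi * Real.exp (-x ^ 2)) x := by
  have hc : Continuous fun t : ℝ => Real.exp (-t ^ 2) := by continuity
  have h := intervalIntegral.integral_hasDerivAt_right
    (hc.intervalIntegrable 0 x) (hc.stronglyMeasurableAtFilter _ _) hc.continuousAt
  exact (h.const_mul (2 / Real.sqrt Real.pi))

lemma erf_pos {x : ℝ} (hx : 0 < x) : 0 < erf x := by
  have hc : Continuous fun t : ℝ => Real.exp (-t ^ 2) := by continuity
  have h : 0 < ∫ t in (0:ℝ)..x, Real.exp (-t ^ 2) :=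
    intervalIntegral.intervalIntegral_pos_of_pos (hc.intervalIntegrable 0 x)
      (fun t => Real.exp_pos _) hx
  have h2 : 0 < 2 / Real.sqrt Real.pi :=
    div_pos two_pos (Real.sqrt_pos.mpr Real.pi_pos)
  exact mul_pos h2 h

theorem pdf_truncated_gaussian_deriv (Gm τ s ε₀ ζ E : ℝ) (hGm : 0 < Gm) (hτ : 1 ≤ τ)
    (hs : 0 < s) (hε₁ : 0 < ε₀) (hε₂ : ε₀ < Real.pi)
    (hζ : ζ = 2 / (τ ^ 2 * s ^ 2)) (hE : E = erf (ε₀ / (Real.sqrt 2 * s))) :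
    ∀ g : ℝ, 0 < g → g < Gm →
      HasDerivAt
        (fun x : ℝ => 1 - erf (Real.sqrt ζ * Real.arccos (Real.sqrt (x / Gm))) / E)
        (Real.sqrt ζ * Real.exp (-ζ * Real.arccos (Real.sqrt (g / Gm)) ^ 2) /
          (E * Real.sqrt Real.pi * Real.sqrt g * Real.sqrt (Gm - g))) g := by
  intro g hg hgGm
  have hτ0 : 0 < τ := lt_of_lt_of_le one_pos hτ
  have hζ0 : 0 < ζ := by
    rw [hζ]; positivity
  have hE0 : 0 < E := by
    rw [hE]; exact erf_pos (by positivity)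
  set u : ℝ := Real.sqrt (g / Gm) with hu
  have hu0 : 0 < u := Real.sqrt_pos.mpr (by positivity)
  have hu2 : u ^ 2 = g / Gm := Real.sq_sqrt (by positivity)
  have hu1 : u < 1 := by
    rw [hu]
    have : g / Gm < 1 := (div_lt_one hGm).mpr hgGm
    calc Real.sqrt (g / Gm) < Real.sqrt 1 := by
          apply Real.sqrt_lt_sqrt (by positivity) this
      _ = 1 := Real.sqrt_one
  -- derivative of x ↦ √(x/Gm) at g
  have h1 : HasDerivAt (fun x : ℝ => x / Gm) (1 / Gm) g := by
    simpa using (hasDerivAt_id g).div_const Gm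
  have h2 : HasDerivAt (fun x : ℝ => Real.sqrt (x / Gm))
      (1 / (2 * u) * (1 / Gm)) g :=
    (Real.hasDerivAt_sqrt (by positivity)).comp g h1
  have h3 : HasDerivAt (fun x : ℝ => Real.arccos (Real.sqrt (x / Gm)))
      (-(1 / Real.sqrt (1 - u ^ 2)) * (1 / (2 * u) * (1 / Gm))) g :=
    by have := (Real.hasDerivAt_arccos (by linarith) (ne_of_lt hu1)).comp g h2; exact this
  have h4 : HasDerivAt (fun x : ℝ => Real.sqrt ζ * Real.arccos (Real.sqrt (x / Gm)))
      (Real.sqrt ζ * (-(1 / Real.sqrt (1 - u ^ 2)) * (1 / (2 * u) * (1 / Gm)))) g :=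
    h3.const_mul _
  have h5 : HasDerivAt (fun x : ℝ => erf (Real.sqrt ζ * Real.arccos (Real.sqrt (x / Gm))))
      (2 / Real.sqrt Real.pi * Real.exp (-(Real.sqrt ζ * Real.arccos u) ^ 2) *
        (Real.sqrt ζ * (-(1 / Real.sqrt (1 - u ^ 2)) * (1 / (2 * u) * (1 / Gm))))) g :=
    (erf_hasDerivAt _).comp g h4
  have h6 := ((h5.div_const E).const_sub 1)
  refine h6.congr_deriv (Eq.symm ?_)
  -- algebraic identity
  have hexp : -(Real.sqrt ζ * Real.arccos u) ^ 2 = -ζ * Real.arccos u ^ 2 := by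
    rw [mul_pow, Real.sq_sqrt hζ0.le]; ring
  have hsub : Real.sqrt (1 - u ^ 2) = Real.sqrt (Gm - g) / Real.sqrt Gm := by
    rw [hu2, ← Real.sqrt_div (by linarith)]
    congr 1
    field_simp
  have hug : u = Real.sqrt g / Real.sqrt Gm := by
    rw [hu, Real.sqrt_div hg.le]
  rw [hexp, hsub, hug]
  have hπ : Real.sqrt Real.pi ≠ 0 := ne_of_gt (Real.sqrt_pos.mpr Real.pi_pos)
  have hsg : Real.sqrt g ≠ 0 := ne_of_gt (Real.sqrt_pos.mpr hg)
  have hsGm : Real.sqrt Gm ≠ 0 := ne_of_gt (Real.sqrt_pos.mpr hGm)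
  have hsGmg : Real.sqrt (Gm - g) ≠ 0 := ne_of_gt (Real.sqrt_pos.mpr (by linarith))
  have hGm2 : Real.sqrt Gm * Real.sqrt Gm = Gm := Real.mul_self_sqrt hGm.le
  field_simp
  ring_nf
  rw [Real.sq_sqrt hGm.le]
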